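/- For every integer k ≥ 1, every finite graph G = (V,E) has a spanning subgraph H = (V,F) such that for every vertex v, |d_H(v) - d_G(v)/k| ≤ 2. -/

import Mathlib

open scoped Classical

/-- Combination of two partial matchings (Cantor–Schröder–Bernstein style):
given an injection `f` defined on `A` respecting `R` and an injection `g` defined on `B`
respecting `R` (backwards), there is a "matching" `M ⊆ R` (injective in both coordinates)
whose first coordinates cover `A` and second coordinates cover `B`. -/
theorem combine_matchings {X Y : Type*} (R : X → Y → Prop) (A : Set X) (B : Set Y)
    (f : X → Y) (g : Y → X)
    (hfR : ∀ a ∈ A, R a (f a)) (hfi : Set.InjOn f A)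
    (hgR : ∀ b ∈ B, R (g b) b) (hgi : Set.InjOn g B) :
    ∃ M : Set (X × Y), (∀ p ∈ M, R p.1 p.2) ∧
      (∀ p ∈ M, ∀ q ∈ M, p.1 = q.1 → p = q) ∧
      (∀ p ∈ M, ∀ q ∈ M, p.2 = q.2 → p = q) ∧
      (∀ a ∈ A, ∃ p ∈ M, p.1 = a) ∧ (∀ b ∈ B, ∃ p ∈ M, p.2 = b) := by
  let Cn : ℕ → Set X := fun n =>
    Nat.rec (g '' (B \ f '' A)) (fun _ Cp => g '' ((f '' (Cp ∩ A)) ∩ B)) n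
  let C : Set X := ⋃ n, Cn n
  have hCn_sub : ∀ n, Cn n ⊆ g '' B := by
    intro n
    cases n with
    | zero => exact Set.image_mono Set.diff_subset
    | succ m => exact Set.image_mono Set.inter_subset_right
  have hCg : C ⊆ g '' B := Set.iUnion_subset hCn_sub
  have hK3 : ∀ a ∈ A, a ∈ C → f a ∈ B → g (f a) ∈ C := by
    rintro a ha hC hfB
    obtain ⟨n, hn⟩ := Set.mem_iUnion.mp hC
    exact Set.mem_iUnion.mpr ⟨n + 1, ⟨f a, ⟨⟨a, ⟨hn, ha⟩, rfl⟩, hfB⟩, rfl⟩⟩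
  have hK2 : ∀ a ∈ A, a ∉ C → f a ∈ B → g (f a) ∉ C := by
    rintro a ha hnC hfB hmem
    obtain ⟨n, hn⟩ := Set.mem_iUnion.mp hmem
    cases n with
    | zero =>
      obtain ⟨b0, ⟨hb0B, hb0nf⟩, hgb0⟩ := hn
      have : f a = b0 := hgi hfB hb0B hgb0.symm
      exact hb0nf ⟨a, ha, this⟩
    | succ m =>
      obtain ⟨b1, ⟨⟨a1, ⟨ha1C, ha1A⟩, hfa1⟩, hb1B⟩, hgb1⟩ := hn
      have hfb : f a = b1 := hgi hfB hb1B hgb1.symm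
      have : a = a1 := hfi ha ha1A (by rw [hfb, hfa1])
      exact hnC (Set.mem_iUnion.mpr ⟨m, this ▸ ha1C⟩)
  refine ⟨{p | (p.1 ∈ A ∧ p.1 ∉ C ∧ p.2 = f p.1) ∨ (p.2 ∈ B ∧ p.1 = g p.2 ∧ p.1 ∈ C)},
    ?_, ?_, ?_, ?_, ?_⟩
  · rintro p (⟨h1, _, h3⟩ | ⟨h1, h2, _⟩)
    · rw [h3]; exact hfR _ h1
    · rw [h2]; exact hgR _ h1
  · rintro p (⟨hp1, hp2, hp3⟩ | ⟨hp1, hp2, hp3⟩) q (⟨hq1, hq2, hq3⟩ | ⟨hq1, hq2, hq3⟩) h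
    · exact Prod.ext h (by rw [hp3, hq3, h])
    · exact absurd (h ▸ hp2) (by rw [hq2] at hq3 ⊢; exact fun hh => hh hq3)
    · exact absurd (h ▸ hq2) (by rw [hp2] at hp3 ⊢; exact fun hh => hh hp3)
    · have : p.2 = q.2 := hgi hp1 hq1 (by rw [← hp2, ← hq2, h])
      exact Prod.ext h this
  · rintro p (⟨hp1, hp2, hp3⟩ | ⟨hp1, hp2, hp3⟩) q (⟨hq1, hq2, hq3⟩ | ⟨hq1, hq2, hq3⟩) h
    · have : p.1 = q.1 := hfi hp1 hq1 (by rw [← hp3, ← hq3, h])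
      exact Prod.ext this h
    · -- p : f-type, q : g-type, p.2 = q.2
      exfalso
      have hfB : f p.1 = q.2 := by rw [← hp3, h]
      have : q.1 = g (f p.1) := by rw [hq2, hfB]
      exact hK2 p.1 hp1 hp2 (hfB ▸ hq1) (this ▸ hq3)
    · exfalso
      have hfB : f q.1 = p.2 := by rw [← hq3, h]
      have : p.1 = g (f q.1) := by rw [hp2, hfB]
      exact hK2 q.1 hq1 hq2 (hfB ▸ hp1) (this ▸ hp3)
    · exact Prod.ext (by rw [hp2, hq2, h]) h
  · intro a ha
    by_cases hC : a ∈ C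
    · obtain ⟨b, hb, hgb⟩ := hCg hC
      exact ⟨(a, b), Or.inr ⟨hb, hgb.symm, hC⟩, rfl⟩
    · exact ⟨(a, f a), Or.inl ⟨ha, hC, rfl⟩, rfl⟩
  · intro b hb
    by_cases hC : g b ∈ C
    · exact ⟨(g b, b), Or.inr ⟨hb, rfl, hC⟩, rfl⟩
    · by_cases hfA : b ∈ f '' A
      · obtain ⟨a, ha, rfl⟩ := hfA
        by_cases haC : a ∈ C
        · exact absurd (hK3 a ha haC hb) hC
        · exact ⟨(a, f a), Or.inl ⟨ha, haC, rfl⟩, rfl⟩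
      · exact absurd (Set.mem_iUnion.mpr ⟨0, show g b ∈ Cn 0 from ⟨b, ⟨hb, hfA⟩, rfl⟩⟩) hC

/-- Hall-type lemma: if every `τ`-fiber of `E` has size at most `k` and every `σ`-fiber over
`A` has size at least `k`, then there is an injection `f` on `A` such that each `c ∈ A` is
linked to `f c` by an element of `E`. -/
theorem hall_aux {C ε : Type*} [DecidableEq C] [DecidableEq ε]
    (E : Finset ε) (σ τ : ε → C) (k : ℕ) (hk : 1 ≤ k)
    (hτ : ∀ c : C, (E.filter fun e => τ e = c).card ≤ k)
    (A : Finset C) (hA : ∀ c ∈ A, k ≤ (E.filter fun e => σ e = c).card) :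
    ∃ f : C → C, Set.InjOn f (A : Set C) ∧
      ∀ c ∈ A, ∃ e ∈ E, σ e = c ∧ τ e = f c := by
  have hk0 : 0 < k := hk
  let t : {x // x ∈ A} → Finset C := fun a => (E.filter fun e => σ e = (a : C)).image τ
  have hall : ∀ s : Finset {x // x ∈ A}, s.card ≤ (s.biUnion t).card := by
    intro s
    set S : Finset C := s.image Subtype.val with hS
    set T : Finset C := s.biUnion t with hT
    have hScard : S.card = s.card := Finset.card_image_of_injective _ Subtype.val_injective
    have h2 : (E.filter fun e => σ e ∈ S).card = ∑ c ∈ S, (E.filter fun e => σ e = c).card := by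
      rw [Finset.card_eq_sum_card_fiberwise (f := σ) (s := E.filter fun e => σ e ∈ S) (t := S)
        (fun e he => (Finset.mem_filter.mp he).2)]
      refine Finset.sum_congr rfl fun c hc => ?_
      congr 1
      rw [Finset.filter_filter]
      exact Finset.filter_congr fun e _ => by
        constructor
        · rintro ⟨_, h⟩; exact h
        · rintro h; exact ⟨h ▸ hc, h⟩
    have h3 : k * S.card ≤ (E.filter fun e => σ e ∈ S).card := by
      rw [h2]
      calc k * S.card = ∑ _c ∈ S, k := by rw [Finset.sum_const, smul_eq_mul, mul_comm]
        _ ≤ _ := Finset.sum_le_sum fun c hc => by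
            obtain ⟨a, _, rfl⟩ := Finset.mem_image.mp hc
            exact hA _ a.2
    have h4 : (E.filter fun e => σ e ∈ S) ⊆ (E.filter fun e => τ e ∈ T) := by
      intro e he
      obtain ⟨heE, heS⟩ := Finset.mem_filter.mp he
      obtain ⟨a, ha, hav⟩ := Finset.mem_image.mp heS
      refine Finset.mem_filter.mpr ⟨heE, Finset.mem_biUnion.mpr ⟨a, ha, ?_⟩⟩
      exact Finset.mem_image.mpr ⟨e, Finset.mem_filter.mpr ⟨heE, hav.symm⟩, rfl⟩
    have h5 : (E.filter fun e => τ e ∈ T).card ≤ k * T.card := by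
      rw [Finset.card_eq_sum_card_fiberwise (f := τ) (s := E.filter fun e => τ e ∈ T) (t := T)
        (fun e he => (Finset.mem_filter.mp he).2)]
      calc ∑ c ∈ T, ((E.filter fun e => τ e ∈ T).filter fun e => τ e = c).card
          ≤ ∑ c ∈ T, k := Finset.sum_le_sum fun c _ => le_trans
            (Finset.card_le_card (by
              intro e he
              obtain ⟨he1, he2⟩ := Finset.mem_filter.mp he
              exact Finset.mem_filter.mpr ⟨(Finset.mem_filter.mp he1).1, he2⟩)) (hτ c)
        _ = k * T.card := by rw [Finset.sum_const, smul_eq_mul, mul_comm]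
    have := le_trans h3 (le_trans (Finset.card_le_card h4) h5)
    rw [hScard] at this
    exact Nat.le_of_mul_le_mul_left this hk0
  obtain ⟨f0, hf0inj, hf0mem⟩ := (Finset.all_card_le_biUnion_card_iff_exists_injective t).mp hall
  refine ⟨fun c => if h : c ∈ A then f0 ⟨c, h⟩ else c, ?_, ?_⟩
  · intro a ha b hb hab
    simp only [Set.mem_setOf_eq, Finset.mem_coe] at ha hb
    simp only [dif_pos ha, dif_pos hb] at hab
    exact congrArg Subtype.val (hf0inj hab)
  · intro c hc
    have := hf0mem ⟨c, hc⟩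
    obtain ⟨e, he, hτe⟩ := Finset.mem_image.mp this
    obtain ⟨heE, hσe⟩ := Finset.mem_filter.mp he
    exact ⟨e, heE, hσe, by simp only [dif_pos hc]; exact hτe⟩

noncomputable def rnk {α : Type*} [LinearOrder α] (s : Finset α) (w : α) : ℕ :=
  (s.filter fun x => x < w).card

theorem rnk_lt {α : Type*} [LinearOrder α] {s : Finset α} {w : α} (hw : w ∈ s) :
    rnk s w < s.card := by
  have h1 : (s.filter fun x => x < w) ⊆ s.erase w := by
    intro x hx
    obtain ⟨hxs, hxw⟩ := Finset.mem_filter.mp hx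
    exact Finset.mem_erase.mpr ⟨ne_of_lt hxw, hxs⟩
  calc rnk s w ≤ (s.erase w).card := Finset.card_le_card h1
    _ < s.card := Finset.card_erase_lt_of_mem hw

theorem rnk_strictMonoOn {α : Type*} [LinearOrder α] {s : Finset α} {w w' : α}
    (hw : w ∈ s) (_hw' : w' ∈ s) (h : w < w') : rnk s w < rnk s w' := by
  apply Finset.card_lt_card
  constructor
  · intro x hx
    obtain ⟨hxs, hxw⟩ := Finset.mem_filter.mp hx
    exact Finset.mem_filter.mpr ⟨hxs, lt_trans hxw h⟩
  · intro hsub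
    have := hsub (Finset.mem_filter.mpr ⟨hw, h⟩)
    exact absurd (Finset.mem_filter.mp this).2 (lt_irrefl w)

theorem rnk_injOn {α : Type*} [LinearOrder α] {s : Finset α} :
    Set.InjOn (rnk s) (s : Set α) := by
  intro w hw w' hw' h
  rcases lt_trichotomy w w' with hlt | heq | hgt
  · exact absurd h (ne_of_lt (rnk_strictMonoOn hw hw' hlt))
  · exact heq
  · exact absurd h.symm (ne_of_lt (rnk_strictMonoOn hw' hw hgt))

theorem rnk_image {α : Type*} [LinearOrder α] (s : Finset α) :
    s.image (rnk s) = Finset.range s.card := by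
  apply Finset.eq_of_subset_of_card_le
  · intro m hm
    obtain ⟨w, hw, rfl⟩ := Finset.mem_image.mp hm
    exact Finset.mem_range.mpr (rnk_lt hw)
  · rw [Finset.card_range, Finset.card_image_of_injOn rnk_injOn]

/-- Cardinality of a block: elements of `s` whose rank divided by `k` equals `i`. -/
theorem rnk_block_card {α : Type*} [LinearOrder α] (s : Finset α) (k i : ℕ) :
    (s.filter fun w => rnk s w / k = i).card
      = ((Finset.range s.card).filter fun m => m / k = i).card := by
  rw [← rnk_image s, Finset.filter_image]
  exact (Finset.card_image_of_injOn (Set.InjOn.mono (by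
    intro x hx; exact Finset.mem_coe.mpr (Finset.mem_of_mem_filter x (Finset.mem_coe.mp hx)))
    rnk_injOn)).symm

theorem range_div_fiber_le (N k i : ℕ) (hk : 1 ≤ k) :
    ((Finset.range N).filter fun m => m / k = i).card ≤ k := by
  have hsub : ((Finset.range N).filter fun m => m / k = i) ⊆ Finset.Ico (k * i) (k * i + k) := by
    intro m hm
    obtain ⟨_, hmi⟩ := Finset.mem_filter.mp hm
    subst hmi
    refine Finset.mem_Ico.mpr ⟨Nat.mul_div_le m k, ?_⟩
    conv_lhs => rw [← Nat.div_add_mod m k]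
    exact Nat.add_lt_add_left (Nat.mod_lt m hk) _
  calc _ ≤ (Finset.Ico (k * i) (k * i + k)).card := Finset.card_le_card hsub
    _ = k := by rw [Nat.card_Ico]; omega

theorem range_div_fiber_eq (N k i : ℕ) (hk : 1 ≤ k) (hN : (i + 1) * k ≤ N) :
    k ≤ ((Finset.range N).filter fun m => m / k = i).card := by
  have hsub : Finset.Ico (k * i) (k * i + k) ⊆ ((Finset.range N).filter fun m => m / k = i) := by
    intro m hm
    obtain ⟨h1, h2⟩ := Finset.mem_Ico.mp hm
    refine Finset.mem_filter.mpr ⟨Finset.mem_range.mpr (by nlinarith), ?_⟩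
    exact Nat.div_eq_of_lt_le (by linarith [Nat.mul_comm k i]) (by
      have : (i + 1) * k = k * i + k := by ring
      omega)
  calc k = (Finset.Ico (k * i) (k * i + k)).card := by rw [Nat.card_Ico]; omega
    _ ≤ _ := Finset.card_le_card hsub

/-- For every `k ≥ 1`, every finite graph `G` has a spanning subgraph `H`
such that for every vertex `v`, `|d_H(v) - d_G(v)/k| ≤ 2`. -/
theorem spanning_subgraph_fraction_degree
    {V : Type} [Fintype V] [DecidableEq V] (G : SimpleGraph V)
    (k : ℕ) (hk : 1 ≤ k) :
    ∃ H : SimpleGraph V, H ≤ G ∧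
      ∀ v : V, |((H.degree v : ℚ) - (G.degree v : ℚ) / k)| ≤ 2 := by
  letI : LinearOrder V := LinearOrder.lift' (fun v => (Fintype.equivFin V) v)
    (Fintype.equivFin V).injective
  set outN : V → Finset V := fun v => (G.neighborFinset v).filter fun w => v < w with houtN
  set inN : V → Finset V := fun v => (G.neighborFinset v).filter fun w => w < v with hinN
  set D : Finset (V × V) := Finset.univ.filter fun e => G.Adj e.1 e.2 ∧ e.1 < e.2 with hD
  set σ : V × V → V × ℕ := fun e => (e.1, rnk (outN e.1) e.2 / k) with hσ
  set τ : V × V → V × ℕ := fun e => (e.2, rnk (inN e.2) e.1 / k) with hτ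
  -- σ-fibers are blocks of out-neighbourhoods
  have hfiberσ : ∀ c : V × ℕ, (D.filter fun e => σ e = c).card
      = ((Finset.range (outN c.1).card).filter fun m => m / k = c.2).card := by
    rintro ⟨v, i⟩
    rw [← rnk_block_card]
    apply Finset.card_bij (fun (e : V × V) _ => e.2)
    · rintro e he
      obtain ⟨heD, heσ⟩ := Finset.mem_filter.mp he
      obtain ⟨hadj, hlt⟩ := (Finset.mem_filter.mp heD).2
      rw [Prod.ext_iff] at heσ
      obtain ⟨h1, h2⟩ := heσ
      simp only [hσ] at h1 h2
      rw [h1] at hadj hlt h2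
      exact Finset.mem_filter.mpr ⟨Finset.mem_filter.mpr
        ⟨(SimpleGraph.mem_neighborFinset G v e.2).mpr hadj, hlt⟩, h2⟩
    · rintro e he e' he' hee
      obtain ⟨heD, heσ⟩ := Finset.mem_filter.mp he
      obtain ⟨heD', heσ'⟩ := Finset.mem_filter.mp he'
      rw [Prod.ext_iff] at heσ heσ'
      exact Prod.ext (heσ.1.trans heσ'.1.symm) hee
    · rintro w hw
      obtain ⟨hw1, hw2⟩ := Finset.mem_filter.mp hw
      obtain ⟨hw3, hw4⟩ := Finset.mem_filter.mp hw1
      refine ⟨(v, w), Finset.mem_filter.mpr ⟨Finset.mem_filter.mpr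
        ⟨Finset.mem_univ _, (SimpleGraph.mem_neighborFinset G v w).mp hw3, hw4⟩, ?_⟩, rfl⟩
      exact Prod.ext rfl hw2
  have hfiberτ : ∀ c : V × ℕ, (D.filter fun e => τ e = c).card
      = ((Finset.range (inN c.1).card).filter fun m => m / k = c.2).card := by
    rintro ⟨v, j⟩
    rw [← rnk_block_card]
    apply Finset.card_bij (fun (e : V × V) _ => e.1)
    · rintro e he
      obtain ⟨heD, heτ⟩ := Finset.mem_filter.mp he
      obtain ⟨hadj, hlt⟩ := (Finset.mem_filter.mp heD).2
      rw [Prod.ext_iff] at heτ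
      obtain ⟨h1, h2⟩ := heτ
      simp only [hτ] at h1 h2
      rw [h1] at hadj hlt h2
      exact Finset.mem_filter.mpr ⟨Finset.mem_filter.mpr
        ⟨(SimpleGraph.mem_neighborFinset G v e.1).mpr hadj.symm, hlt⟩, h2⟩
    · rintro e he e' he' hee
      obtain ⟨heD, heτ⟩ := Finset.mem_filter.mp he
      obtain ⟨heD', heτ'⟩ := Finset.mem_filter.mp he'
      rw [Prod.ext_iff] at heτ heτ'
      exact Prod.ext hee (heτ.1.trans heτ'.1.symm)
    · rintro w hw
      obtain ⟨hw1, hw2⟩ := Finset.mem_filter.mp hw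
      obtain ⟨hw3, hw4⟩ := Finset.mem_filter.mp hw1
      refine ⟨(w, v), Finset.mem_filter.mpr ⟨Finset.mem_filter.mpr
        ⟨Finset.mem_univ _, ((SimpleGraph.mem_neighborFinset G v w).mp hw3).symm, hw4⟩, ?_⟩, rfl⟩
      exact Prod.ext rfl hw2
  have hτk : ∀ c : V × ℕ, (D.filter fun e => τ e = c).card ≤ k := fun c => by
    rw [hfiberτ c]; exact range_div_fiber_le _ _ _ hk
  have hσk : ∀ c : V × ℕ, (D.filter fun e => σ e = c).card ≤ k := fun c => by
    rw [hfiberσ c]; exact range_div_fiber_le _ _ _ hk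
  set Afin : Finset (V × ℕ) := Finset.univ.biUnion
    (fun v => (Finset.range ((outN v).card / k)).image fun i => ((v, i) : V × ℕ)) with hAfin
  set Bfin : Finset (V × ℕ) := Finset.univ.biUnion
    (fun v => (Finset.range ((inN v).card / k)).image fun j => ((v, j) : V × ℕ)) with hBfin
  have hAfull : ∀ c ∈ Afin, k ≤ (D.filter fun e => σ e = c).card := by
    intro c hc
    obtain ⟨v, -, hc⟩ := Finset.mem_biUnion.mp hc
    obtain ⟨i, hi, rfl⟩ := Finset.mem_image.mp hc
    rw [hfiberσ]
    exact range_div_fiber_eq _ _ _ hk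
      ((Nat.le_div_iff_mul_le hk).mp (Finset.mem_range.mp hi))
  have hBfull : ∀ c ∈ Bfin, k ≤ (D.filter fun e => τ e = c).card := by
    intro c hc
    obtain ⟨v, -, hc⟩ := Finset.mem_biUnion.mp hc
    obtain ⟨j, hj, rfl⟩ := Finset.mem_image.mp hc
    rw [hfiberτ]
    exact range_div_fiber_eq _ _ _ hk
      ((Nat.le_div_iff_mul_le hk).mp (Finset.mem_range.mp hj))
  obtain ⟨f, hfinj, hfcov⟩ := hall_aux D σ τ k hk hτk Afin hAfull
  obtain ⟨g, hginj, hgcov⟩ := hall_aux D τ σ k hk hσk Bfin hBfull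
  obtain ⟨M, hMR, hMl, hMr, hMcA, hMcB⟩ := combine_matchings
    (fun c c' => ∃ e ∈ D, σ e = c ∧ τ e = c') (↑Afin) (↑Bfin) f g
    (fun a ha => hfcov a ha)
    hfinj
    (fun b hb => by obtain ⟨e, he, h1, h2⟩ := hgcov b hb; exact ⟨e, he, h2, h1⟩)
    hginj
  have hM' : ∀ v i w j, (((v, i), (w, j)) : (V × ℕ) × (V × ℕ)) ∈ M →
      (G.Adj v w ∧ v < w) ∧ rnk (outN v) w / k = i ∧ rnk (inN w) v / k = j := by
    intro v i w j hp
    obtain ⟨e, heD, hσe, hτe⟩ := hMR _ hp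
    rw [Prod.ext_iff] at hσe hτe
    obtain ⟨h1, h2⟩ := hσe
    obtain ⟨h3, h4⟩ := hτe
    simp only [hσ, hτ] at h1 h2 h3 h4
    rw [h1, h3] at h2 h4
    obtain ⟨hadj, hlt⟩ := (Finset.mem_filter.mp heD).2
    rw [h1, h3] at hadj hlt
    exact ⟨⟨hadj, hlt⟩, h2, h4⟩
  refine ⟨SimpleGraph.fromRel (fun v w => ∃ i j : ℕ, (((v, i), (w, j)) : _ × _) ∈ M), ?_, ?_⟩
  · intro v w hvw
    rw [SimpleGraph.fromRel_adj] at hvw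
    obtain ⟨hne, ⟨i, j, hp⟩ | ⟨i, j, hp⟩⟩ := hvw
    · exact ((hM' v i w j hp).1).1
    · exact (((hM' w i v j hp).1).1).symm
  · intro v
    set o := (outN v).card with ho
    set ι := (inN v).card with hι
    have hdeg : G.degree v = o + ι := by
      have h2 : Finset.filter (fun w => ¬ v < w) (G.neighborFinset v) = inN v :=
        Finset.filter_congr (fun w hw => by
          have hne : w ≠ v := fun h => G.irrefl (h ▸ (SimpleGraph.mem_neighborFinset G v w).mp hw)
          simp only [not_lt]
          exact ⟨fun h => lt_of_le_of_ne h hne, fun h => le_of_lt h⟩)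
      have h3 := Finset.card_filter_add_card_filter_not
        (p := fun w => v < w) (s := G.neighborFinset v)
      rw [h2] at h3
      exact h3.symm
    set OutS := Finset.univ.filter
      (fun w => ∃ i j : ℕ, (((v, i), (w, j)) : (V × ℕ) × (V × ℕ)) ∈ M) with hOutS
    set InS := Finset.univ.filter
      (fun w => ∃ i j : ℕ, (((w, i), (v, j)) : (V × ℕ) × (V × ℕ)) ∈ M) with hInS
    have hnb : (SimpleGraph.fromRel
        (fun v w => ∃ i j : ℕ, (((v, i), (w, j)) : _ × _) ∈ M)).neighborFinset v
        = OutS ∪ InS := by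
      ext w
      rw [SimpleGraph.mem_neighborFinset, SimpleGraph.fromRel_adj, Finset.mem_union]
      constructor
      · rintro ⟨-, h | h⟩
        · exact Or.inl (Finset.mem_filter.mpr ⟨Finset.mem_univ _, h⟩)
        · exact Or.inr (Finset.mem_filter.mpr ⟨Finset.mem_univ _, h⟩)
      · rintro (h | h)
        · obtain ⟨i, j, hp⟩ := (Finset.mem_filter.mp h).2
          exact ⟨ne_of_lt ((hM' v i w j hp).1.2), Or.inl ⟨i, j, hp⟩⟩
        · obtain ⟨i, j, hp⟩ := (Finset.mem_filter.mp h).2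
          exact ⟨ne_of_gt ((hM' w i v j hp).1.2), Or.inr ⟨i, j, hp⟩⟩
    have hdisj : Disjoint OutS InS := by
      rw [Finset.disjoint_left]
      intro w hw1 hw2
      obtain ⟨i, j, hp⟩ := (Finset.mem_filter.mp hw1).2
      obtain ⟨i', j', hp'⟩ := (Finset.mem_filter.mp hw2).2
      exact absurd ((hM' v i w j hp).1.2) (not_lt_of_gt ((hM' w i' v j' hp').1.2))
    have hdHcard : (SimpleGraph.fromRel
        (fun v w => ∃ i j : ℕ, (((v, i), (w, j)) : _ × _) ∈ M)).degree v
        = OutS.card + InS.card := by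
      rw [SimpleGraph.degree, hnb, Finset.card_union_of_disjoint hdisj]
    -- upper bound for OutS
    have hOutUp : OutS.card ≤ (o - 1) / k + 1 := by
      rw [← Finset.card_range ((o - 1) / k + 1)]
      apply Finset.card_le_card_of_injOn (fun w => rnk (outN v) w / k)
      · intro w hw
        obtain ⟨i, j, hp⟩ := (Finset.mem_filter.mp hw).2
        obtain ⟨⟨hadj, hlt⟩, -, -⟩ := hM' v i w j hp
        have hwmem : w ∈ outN v := Finset.mem_filter.mpr
          ⟨(SimpleGraph.mem_neighborFinset G v w).mpr hadj, hlt⟩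
        have := rnk_lt hwmem
        rw [Finset.mem_coe, Finset.mem_range]
        have h2 : rnk (outN v) w ≤ o - 1 := by omega
        exact Nat.lt_succ_of_le (Nat.div_le_div_right h2)
      · intro w hw w' hw' heq
        obtain ⟨i, j, hp⟩ := (Finset.mem_filter.mp hw).2
        obtain ⟨i', j', hp'⟩ := (Finset.mem_filter.mp hw').2
        have e1 : rnk (outN v) w / k = i := (hM' v i w j hp).2.1
        have e1' : rnk (outN v) w' / k = i' := (hM' v i' w' j' hp').2.1
        have h12 : i = i' := by rw [← e1, ← e1']; exact heq
        subst h12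
        have hpq := hMl _ hp _ hp' rfl
        exact congrArg (fun p => p.2.1) hpq
    -- lower bound for OutS
    have hOutLo : o / k ≤ OutS.card := by
      rw [← Finset.card_range (o / k)]
      apply Finset.card_le_card_of_injOn
        (fun i => if h : ∃ p, p ∈ M ∧ p.1 = ((v, i) : V × ℕ) then (Classical.choose h).2.1 else v)
      · intro i hi
        have hvA : ((v, i) : V × ℕ) ∈ Afin := Finset.mem_biUnion.mpr
          ⟨v, Finset.mem_univ _, Finset.mem_image.mpr ⟨i, hi, rfl⟩⟩
        have hex : ∃ p, p ∈ M ∧ p.1 = ((v, i) : V × ℕ) := by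
          obtain ⟨p, hpM, hp1⟩ := hMcA (v, i) hvA
          exact ⟨p, hpM, hp1⟩
        rw [Finset.mem_coe]; dsimp only; rw [dif_pos hex]
        obtain ⟨hpM, hp1⟩ := Classical.choose_spec hex
        set p := Classical.choose hex
        have hpeq : p = ((v, i), (p.2.1, p.2.2)) := by
          rw [← hp1]
        refine Finset.mem_filter.mpr ⟨Finset.mem_univ _, i, p.2.2, ?_⟩
        rw [← hpeq]; exact hpM
      · intro i hi i' hi' heq
        simp only at heq
        have hvA : ((v, i) : V × ℕ) ∈ Afin := Finset.mem_biUnion.mpr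
          ⟨v, Finset.mem_univ _, Finset.mem_image.mpr ⟨i, hi, rfl⟩⟩
        have hvA' : ((v, i') : V × ℕ) ∈ Afin := Finset.mem_biUnion.mpr
          ⟨v, Finset.mem_univ _, Finset.mem_image.mpr ⟨i', hi', rfl⟩⟩
        have hex : ∃ p, p ∈ M ∧ p.1 = ((v, i) : V × ℕ) := by
          obtain ⟨p, hpM, hp1⟩ := hMcA (v, i) hvA; exact ⟨p, hpM, hp1⟩
        have hex' : ∃ p, p ∈ M ∧ p.1 = ((v, i') : V × ℕ) := by
          obtain ⟨p, hpM, hp1⟩ := hMcA (v, i') hvA'; exact ⟨p, hpM, hp1⟩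
        rw [dif_pos hex, dif_pos hex'] at heq
        obtain ⟨hpM, hp1⟩ := Classical.choose_spec hex
        obtain ⟨hpM', hp1'⟩ := Classical.choose_spec hex'
        set p := Classical.choose hex
        set p' := Classical.choose hex'
        have hpeq : p = ((v, i), (p.2.1, p.2.2)) := by rw [← hp1]
        have hpeq' : p' = ((v, i'), (p'.2.1, p'.2.2)) := by rw [← hp1']
        have hj : rnk (inN p.2.1) v / k = p.2.2 := (hM' v i p.2.1 p.2.2 (hpeq ▸ hpM)).2.2
        have hj' : rnk (inN p'.2.1) v / k = p'.2.2 := (hM' v i' p'.2.1 p'.2.2 (hpeq' ▸ hpM')).2.2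
        have h2nd : p.2 = p'.2 := by
          apply Prod.ext
          · exact heq
          · rw [← hj, ← hj', heq]
        have := hMr _ hpM _ hpM' h2nd
        have h1st : ((v, i) : V × ℕ) = (v, i') := by rw [← hp1, ← hp1', this]
        exact (Prod.ext_iff.mp h1st).2
    -- upper bound for InS
    have hInUp : InS.card ≤ (ι - 1) / k + 1 := by
      rw [← Finset.card_range ((ι - 1) / k + 1)]
      apply Finset.card_le_card_of_injOn (fun w => rnk (inN v) w / k)
      · intro w hw
        obtain ⟨i, j, hp⟩ := (Finset.mem_filter.mp hw).2
        obtain ⟨⟨hadj, hlt⟩, -, hj⟩ := hM' w i v j hp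
        have hwmem : w ∈ inN v := Finset.mem_filter.mpr
          ⟨(SimpleGraph.mem_neighborFinset G v w).mpr hadj.symm, hlt⟩
        have := rnk_lt hwmem
        rw [Finset.mem_coe, Finset.mem_range]
        have h2 : rnk (inN v) w ≤ ι - 1 := by omega
        exact Nat.lt_succ_of_le (Nat.div_le_div_right h2)
      · intro w hw w' hw' heq
        obtain ⟨i, j, hp⟩ := (Finset.mem_filter.mp hw).2
        obtain ⟨i', j', hp'⟩ := (Finset.mem_filter.mp hw').2
        have e1 : rnk (inN v) w / k = j := (hM' w i v j hp).2.2
        have e1' : rnk (inN v) w' / k = j' := (hM' w' i' v j' hp').2.2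
        have h12 : j = j' := by rw [← e1, ← e1']; exact heq
        subst h12
        have hpq := hMr _ hp _ hp' rfl
        exact congrArg (fun p => p.1.1) hpq
    -- lower bound for InS
    have hInLo : ι / k ≤ InS.card := by
      rw [← Finset.card_range (ι / k)]
      apply Finset.card_le_card_of_injOn
        (fun j => if h : ∃ p, p ∈ M ∧ p.2 = ((v, j) : V × ℕ) then (Classical.choose h).1.1 else v)
      · intro j hj
        have hvB : ((v, j) : V × ℕ) ∈ Bfin := Finset.mem_biUnion.mpr
          ⟨v, Finset.mem_univ _, Finset.mem_image.mpr ⟨j, hj, rfl⟩⟩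
        have hex : ∃ p, p ∈ M ∧ p.2 = ((v, j) : V × ℕ) := by
          obtain ⟨p, hpM, hp2⟩ := hMcB (v, j) hvB; exact ⟨p, hpM, hp2⟩
        rw [Finset.mem_coe]; dsimp only; rw [dif_pos hex]
        obtain ⟨hpM, hp2⟩ := Classical.choose_spec hex
        set p := Classical.choose hex
        have hpeq : p = ((p.1.1, p.1.2), (v, j)) := by
          rw [← hp2]
        refine Finset.mem_filter.mpr ⟨Finset.mem_univ _, p.1.2, j, ?_⟩
        rw [← hpeq]; exact hpM
      · intro j hj j' hj' heq
        simp only at heq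
        have hvB : ((v, j) : V × ℕ) ∈ Bfin := Finset.mem_biUnion.mpr
          ⟨v, Finset.mem_univ _, Finset.mem_image.mpr ⟨j, hj, rfl⟩⟩
        have hvB' : ((v, j') : V × ℕ) ∈ Bfin := Finset.mem_biUnion.mpr
          ⟨v, Finset.mem_univ _, Finset.mem_image.mpr ⟨j', hj', rfl⟩⟩
        have hex : ∃ p, p ∈ M ∧ p.2 = ((v, j) : V × ℕ) := by
          obtain ⟨p, hpM, hp2⟩ := hMcB (v, j) hvB; exact ⟨p, hpM, hp2⟩
        have hex' : ∃ p, p ∈ M ∧ p.2 = ((v, j') : V × ℕ) := by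
          obtain ⟨p, hpM, hp2⟩ := hMcB (v, j') hvB'; exact ⟨p, hpM, hp2⟩
        rw [dif_pos hex, dif_pos hex'] at heq
        obtain ⟨hpM, hp2⟩ := Classical.choose_spec hex
        obtain ⟨hpM', hp2'⟩ := Classical.choose_spec hex'
        set p := Classical.choose hex
        set p' := Classical.choose hex'
        have hpeq : p = ((p.1.1, p.1.2), (v, j)) := by rw [← hp2]
        have hpeq' : p' = ((p'.1.1, p'.1.2), (v, j')) := by rw [← hp2']
        have hi : rnk (outN p.1.1) v / k = p.1.2 := (hM' p.1.1 p.1.2 v j (hpeq ▸ hpM)).2.1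
        have hi' : rnk (outN p'.1.1) v / k = p'.1.2 := (hM' p'.1.1 p'.1.2 v j' (hpeq' ▸ hpM')).2.1
        have h1st : p.1 = p'.1 := by
          apply Prod.ext
          · exact heq
          · rw [← hi, ← hi', heq]
        have := hMl _ hpM _ hpM' h1st
        have h2nd : ((v, j) : V × ℕ) = (v, j') := by rw [← hp2, ← hp2', this]
        exact (Prod.ext_iff.mp h2nd).2
    -- natural number bounds
    have hN1 : k * (OutS.card + InS.card) ≤ (o + ι) + 2 * k := by
      have a1 := Nat.mul_le_mul_left k hOutUp
      have a2 := Nat.mul_le_mul_left k hInUp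
      have b1 : k * ((o - 1) / k) ≤ o - 1 := Nat.mul_div_le (o - 1) k
      have b2 : k * ((ι - 1) / k) ≤ ι - 1 := Nat.mul_div_le (ι - 1) k
      have c1 : k * ((o - 1) / k + 1) = k * ((o - 1) / k) + k := by ring
      have c2 : k * ((ι - 1) / k + 1) = k * ((ι - 1) / k) + k := by ring
      have d1 : k * (OutS.card + InS.card) = k * OutS.card + k * InS.card := by ring
      omega
    have hN2 : o + ι ≤ k * (OutS.card + InS.card) + 2 * k := by
      have a1 := Nat.mul_le_mul_left k hOutLo
      have a2 := Nat.mul_le_mul_left k hInLo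
      have b1 : o < k * (o / k) + k := by
        conv_lhs => rw [← Nat.div_add_mod o k]
        exact Nat.add_lt_add_left (Nat.mod_lt o hk) _
      have b2 : ι < k * (ι / k) + k := by
        conv_lhs => rw [← Nat.div_add_mod ι k]
        exact Nat.add_lt_add_left (Nat.mod_lt ι hk) _
      have d1 : k * (OutS.card + InS.card) = k * OutS.card + k * InS.card := by ring
      omega
    -- rational arithmetic
    refine Eq.trans_le (b := |(((OutS.card + InS.card : ℕ) : ℚ) - ((o + ι : ℕ) : ℚ) / k)|) ?_ ?_
    · rw [← hdHcard, ← hdeg]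
      congr!
    have hk0 : (0 : ℚ) < (k : ℚ) := by exact_mod_cast hk
    have hQ1 : (k : ℚ) * ((OutS.card : ℚ) + (InS.card : ℚ)) ≤ ((o : ℚ) + (ι : ℚ)) + 2 * k := by
      exact_mod_cast hN1
    have hQ2 : ((o : ℚ) + (ι : ℚ)) ≤ (k : ℚ) * ((OutS.card : ℚ) + (InS.card : ℚ)) + 2 * k := by
      exact_mod_cast hN2
    rw [abs_le]
    constructor
    · rw [neg_le, neg_sub, sub_le_iff_le_add, div_le_iff₀ hk0]
      push_cast
      nlinarith
    · rw [sub_le_iff_le_add]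
      have h2 : ((o + ι : ℕ) : ℚ) / k + 2 = ((o : ℚ) + ι + 2 * k) / k := by
        rw [eq_div_iff (ne_of_gt hk0), add_mul, div_mul_cancel₀ _ (ne_of_gt hk0)]
        push_cast
        ring
      rw [add_comm (2 : ℚ), h2, le_div_iff₀ hk0]
      push_cast
      nlinarith
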